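/- Let Σ be a finite alphabet, m ≥ 1 an integer, and let 0 < ε ≤ 1 and 0 < δ < 1 be reals. Let 𝒞 ⊆ Σ^m be a code of relative distance at least δ, i.e., any two distinct elements of 𝒞 differ in at least δ·m coordinates. Then every subset S ⊆ 𝒞 that collides on more than ε·m coordinates satisfies |S| ≥ √(2ε/(1−δ)). -/

import Mathlib

/-- Lemma 3.1 (Karthik–Navon): if `𝒞 ⊆ Σ^m` has relative distance at least `δ`,
then every subset `S ⊆ 𝒞` colliding on more than `ε·m` coordinates has
`|S| ≥ √(2ε/(1−δ))`. -/
theorem collision_number_of_distance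
    (σ : Type) [Fintype σ] (m : ℕ) (hm : 1 ≤ m)
    (ε δ : ℝ) (hε0 : 0 < ε) (hε1 : ε ≤ 1) (hδ0 : 0 < δ) (hδ1 : δ < 1)
    (𝒞 : Set (Fin m → σ))
    (hdist : ∀ x ∈ 𝒞, ∀ y ∈ 𝒞, x ≠ y →
      δ * (m : ℝ) ≤ (({j : Fin m | x j ≠ y j}).ncard : ℝ))
    (S : Set (Fin m → σ)) (hS : S ⊆ 𝒞)
    (hcol : ε * (m : ℝ) < (({j : Fin m | ∃ x ∈ S, ∃ y ∈ S, x ≠ y ∧ x j = y j}).ncard : ℝ)) :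
    Real.sqrt (2 * ε / (1 - δ)) ≤ (S.ncard : ℝ) := by
  classical
  letI : LinearOrder (Fin m → σ) :=
    LinearOrder.lift' (Fintype.equivFin (Fin m → σ)) (Equiv.injective _)
  have hSfin : S.Finite := Set.toFinite S
  set Sf : Finset (Fin m → σ) := hSfin.toFinset with hSf
  have hkS : S.ncard = Sf.card := Set.ncard_eq_toFinset_card S hSfin
  set T : Set (Fin m) := {j : Fin m | ∃ x ∈ S, ∃ y ∈ S, x ≠ y ∧ x j = y j} with hT
  have hTfin : T.Finite := Set.toFinite T
  set Tf : Finset (Fin m) := hTfin.toFinset with hTf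
  have hkT : T.ncard = Tf.card := Set.ncard_eq_toFinset_card T hTfin
  set P : Finset ((Fin m → σ) × (Fin m → σ)) :=
    Sf.offDiag.filter (fun p => p.1 < p.2) with hP
  -- covering
  have hsub : Tf ⊆ P.biUnion (fun p => Finset.univ.filter (fun j => p.1 j = p.2 j)) := by
    intro j hj
    rw [hTf, Set.Finite.mem_toFinset] at hj
    obtain ⟨x, hx, y, hy, hxy, hjeq⟩ := hj
    rcases lt_or_gt_of_ne hxy with h | h
    · refine Finset.mem_biUnion.2 ⟨(x, y), ?_, ?_⟩
      · simp [hP, Finset.mem_offDiag, hSf, Set.Finite.mem_toFinset, hx, hy, hxy, h]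
      · simp [hjeq]
    · refine Finset.mem_biUnion.2 ⟨(y, x), ?_, ?_⟩
      · simp [hP, Finset.mem_offDiag, hSf, Set.Finite.mem_toFinset, hx, hy, hxy.symm, h]
      · simp [hjeq.symm]
  -- fiber bound
  have hfiber : ∀ p ∈ P, ((Finset.univ.filter (fun j => p.1 j = p.2 j)).card : ℝ)
      ≤ (1 - δ) * m := by
    intro p hp
    rw [hP, Finset.mem_filter, Finset.mem_offDiag] at hp
    obtain ⟨⟨h1, h2, hne⟩, _⟩ := hp
    rw [hSf, Set.Finite.mem_toFinset] at h1 h2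
    have hd := hdist p.1 (hS h1) p.2 (hS h2) hne
    have hcompl : (Finset.univ.filter (fun j => p.1 j = p.2 j)).card
        + (Finset.univ.filter (fun j => ¬ p.1 j = p.2 j)).card = m := by
      rw [Finset.card_filter_add_card_filter_not]
      simp
    have hncard : ({j : Fin m | p.1 j ≠ p.2 j}).ncard
        = (Finset.univ.filter (fun j => ¬ p.1 j = p.2 j)).card := by
      rw [Set.ncard_eq_toFinset_card']
      congr 1
      ext j
      simp
    rw [hncard] at hd
    have : ((Finset.univ.filter (fun j => p.1 j = p.2 j)).card : ℝ)
        + ((Finset.univ.filter (fun j => ¬ p.1 j = p.2 j)).card : ℝ) = m := by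
      exact_mod_cast congrArg (Nat.cast : ℕ → ℝ) hcompl
    nlinarith [Nat.cast_nonneg (α := ℝ) (Finset.univ.filter (fun j => ¬ p.1 j = p.2 j)).card]
  -- pair count bound : 2 * P.card ≤ Sf.card * Sf.card
  have hPcard : 2 * P.card ≤ Sf.card * Sf.card := by
    have hinj : (P.image Prod.swap).card = P.card :=
      Finset.card_image_of_injective _ Prod.swap_injective
    have hdisj : Disjoint P (P.image Prod.swap) := by
      rw [Finset.disjoint_left]
      intro p hp hp'
      rw [hP, Finset.mem_filter] at hp
      obtain ⟨q, hq, hqs⟩ := Finset.mem_image.1 hp'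
      rw [hP, Finset.mem_filter] at hq
      have : p.2 < p.1 := by
        have := hq.2
        rw [← hqs]
        simpa using this
      exact absurd (hp.2.trans this) (lt_irrefl _)
    have hsub2 : P ∪ P.image Prod.swap ⊆ Sf.offDiag := by
      intro p hp
      rcases Finset.mem_union.1 hp with h | h
      · exact (Finset.mem_filter.1 h).1
      · obtain ⟨q, hq, hqs⟩ := Finset.mem_image.1 h
        have := (Finset.mem_filter.1 hq).1
        rw [Finset.mem_offDiag] at this ⊢
        rw [← hqs]
        exact ⟨this.2.1, this.1, fun hh => this.2.2 hh.symm⟩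
    have := Finset.card_le_card hsub2
    rw [Finset.card_union_of_disjoint hdisj, hinj] at this
    calc 2 * P.card = P.card + P.card := by ring
    _ ≤ Sf.offDiag.card := this
    _ = Sf.card * Sf.card - Sf.card := Finset.offDiag_card Sf
    _ ≤ Sf.card * Sf.card := Nat.sub_le _ _
  -- main counting inequality
  have hcount : ((Tf.card : ℝ)) ≤ (P.card : ℝ) * ((1 - δ) * m) := by
    calc ((Tf.card : ℝ)) ≤ ((P.biUnion (fun p => Finset.univ.filter (fun j => p.1 j = p.2 j))).card : ℝ) := by
          exact_mod_cast Finset.card_le_card hsub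
    _ ≤ (∑ p ∈ P, (Finset.univ.filter (fun j => p.1 j = p.2 j)).card : ℕ) := by
          exact_mod_cast Finset.card_biUnion_le
    _ = ∑ p ∈ P, ((Finset.univ.filter (fun j => p.1 j = p.2 j)).card : ℝ) := by
          push_cast; ring
    _ ≤ ∑ p ∈ P, (1 - δ) * m := Finset.sum_le_sum hfiber
    _ = (P.card : ℝ) * ((1 - δ) * m) := by rw [Finset.sum_const, nsmul_eq_mul]
  have hm0 : (0:ℝ) < m := by exact_mod_cast hm
  set k : ℝ := (S.ncard : ℝ) with hkdef
  have hk0 : 0 ≤ k := Nat.cast_nonneg _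
  have hPk : (2 : ℝ) * P.card ≤ k * k := by
    have : ((2 * P.card : ℕ) : ℝ) ≤ ((Sf.card * Sf.card : ℕ) : ℝ) := by exact_mod_cast hPcard
    push_cast at this
    rw [hkdef, hkS]
    push_cast
    linarith
  have hδ' : (0:ℝ) < 1 - δ := by linarith
  have hkey : 2 * ε / (1 - δ) ≤ k ^ 2 := by
    rw [hkT] at hcol
    have h1 : ε * m < (P.card : ℝ) * ((1 - δ) * m) := lt_of_lt_of_le hcol hcount
    have h2 : (P.card : ℝ) ≤ k * k / 2 := by linarith
    have h3 : ε * m < (k * k / 2) * ((1 - δ) * m) := by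
      calc ε * m < (P.card : ℝ) * ((1 - δ) * m) := h1
      _ ≤ (k * k / 2) * ((1 - δ) * m) := by
          apply mul_le_mul_of_nonneg_right h2
          positivity
    have h4 : ε < (k * k / 2) * (1 - δ) := by
      nlinarith
    rw [div_le_iff₀ hδ']
    nlinarith
  calc Real.sqrt (2 * ε / (1 - δ)) ≤ Real.sqrt (k ^ 2) := Real.sqrt_le_sqrt hkey
  _ = k := by rw [Real.sqrt_sq hk0]
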